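/- The metacyclic group K_{m,n} = ⟨a, b : a^m = 1, b^{2n} = a^g, bab⁻¹ = a⁻¹⟩ of order 2mn is solvable, and for every divisor h of 2mn, K_{m,n} contains a subgroup of order h. -/

import Mathlib

/-- The relations of the metacyclic presentation
`K_{m,n} = ⟨a, b : a^m = 1, b^(2n) = a^g, b a b⁻¹ = a⁻¹⟩`, with generator `0`
playing the role of `a` and generator `1` playing the role of `b`. -/
def Krels (m n g : ℕ) : Set (FreeGroup (Fin 2)) :=
  {FreeGroup.of 0 ^ m,
   FreeGroup.of 1 ^ (2 * n) * (FreeGroup.of 0 ^ g)⁻¹,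
   FreeGroup.of 1 * FreeGroup.of 0 * (FreeGroup.of 1)⁻¹ * FreeGroup.of 0}

namespace KAux

variable {G : Type*} [Group G]

def zmodPowHom (N : ℕ) [NeZero N] (x : G) (hx : x ^ N = 1) :
    Multiplicative (ZMod N) →* G :=
  MonoidHom.mk' (fun j => x ^ (Multiplicative.toAdd j).val) (by
    intro a b
    show x ^ (Multiplicative.toAdd a + Multiplicative.toAdd b).val = _
    rw [← pow_add]
    refine pow_eq_pow_iff_modEq.2 ?_
    have h1 : (Multiplicative.toAdd a + Multiplicative.toAdd b).val
        ≡ (Multiplicative.toAdd a).val + (Multiplicative.toAdd b).val [MOD N] := by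
      rw [ZMod.val_add]; exact (Nat.mod_modEq _ N)
    exact h1.of_dvd (orderOf_dvd_of_pow_eq_one hx))

lemma zmodPowHom_apply (N : ℕ) [NeZero N] (x : G) (hx : x ^ N = 1) (j : ZMod N) :
    zmodPowHom N x hx (Multiplicative.ofAdd j) = x ^ j.val := rfl

lemma zmodPowHom_natCast (N : ℕ) [NeZero N] (x : G) (hx : x ^ N = 1) (k : ℕ) :
    zmodPowHom N x hx (Multiplicative.ofAdd (k : ZMod N)) = x ^ k := by
  rw [zmodPowHom_apply]
  refine pow_eq_pow_iff_modEq.2 ?_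
  exact (Nat.ModEq.of_dvd (orderOf_dvd_of_pow_eq_one hx)
    (by rw [ZMod.val_natCast]; exact (Nat.mod_modEq _ N)))

/-! ### the concrete model -/

abbrev MM (m : ℕ) := Multiplicative (ZMod m)

def negA (m : ℕ) : MulAut (MM m) := MulEquiv.inv (MM m)

lemma negA_sq (m : ℕ) : (negA m) ^ 2 = 1 := by
  ext x
  show negA m (negA m x) = x
  simp [negA]

lemma negA_pow_even (m : ℕ) {k : ℕ} (hk : Even k) (x : MM m) : ((negA m) ^ k) x = x := by
  obtain ⟨t, rfl⟩ := hk
  have : (negA m) ^ (t + t) = 1 := by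
    rw [← two_mul, pow_mul, negA_sq, one_pow]
  rw [this]; rfl

lemma negA_pow_odd (m : ℕ) {k : ℕ} (hk : Odd k) (x : MM m) : ((negA m) ^ k) x = x⁻¹ := by
  obtain ⟨t, rfl⟩ := hk
  rw [pow_add, pow_mul, negA_sq, one_pow, one_mul, pow_one]
  rfl

variable (m n : ℕ) [NeZero m] [NeZero n]

instance : NeZero (4 * n) := ⟨by have := NeZero.ne n; omega⟩

def phi : Multiplicative (ZMod (4 * n)) →* MulAut (MM m) :=
  zmodPowHom (4 * n) (negA m) (by
    have : 4 * n = 2 * (2 * n) := by ring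
    rw [this, pow_mul, negA_sq, one_pow])

abbrev G0 := SemidirectProduct (MM m) (Multiplicative (ZMod (4 * n))) (phi m n)

variable (g : ℕ)

def zelt : G0 m n := ⟨Multiplicative.ofAdd (-(g : ZMod m)), Multiplicative.ofAdd ((2 * n : ℕ) : ZMod (4 * n))⟩

def Z0 : Subgroup (G0 m n) := Subgroup.normalClosure {zelt m n g}

instance : (Z0 m n g).Normal := Subgroup.normalClosure_normal

abbrev Kgrp := G0 m n ⧸ Z0 m n g

open SemidirectProduct Multiplicative

set_option linter.unusedSectionVars false

lemma phi_ofAdd (j : ZMod (4 * n)) : phi m n (ofAdd j) = (negA m) ^ j.val := rfl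

lemma phi_apply (j : Multiplicative (ZMod (4 * n))) (x : MM m) :
    phi m n j x = ((negA m) ^ (Multiplicative.toAdd j).val) x := rfl

lemma val_two_n : ((2 * n : ℕ) : ZMod (4 * n)).val = 2 * n := by
  have := NeZero.ne n
  rw [ZMod.val_natCast, Nat.mod_eq_of_lt (by omega)]

lemma phi_two_n (x : MM m) : phi m n (ofAdd ((2 * n : ℕ) : ZMod (4 * n))) x = x := by
  rw [phi_apply, toAdd_ofAdd]
  have he : Even (((2 * n : ℕ) : ZMod (4*n)) : ZMod (4*n)).val := by
    rw [val_two_n]; exact ⟨n, by ring⟩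
  rw [negA_pow_even _ he]

lemma phi_mem (A : Subgroup (MM m)) (j : Multiplicative (ZMod (4 * n))) {x : MM m}
    (hx : x ∈ A) : phi m n j x ∈ A := by
  rw [phi_apply]
  rcases Nat.even_or_odd (Multiplicative.toAdd j).val with he | ho
  · rw [negA_pow_even _ he]; exact hx
  · rw [negA_pow_odd _ ho]; exact inv_mem hx

variable {m n g}

lemma zelt_left : (zelt m n g).left = ofAdd (-(g : ZMod m)) := rfl
lemma zelt_right : (zelt m n g).right = ofAdd ((2 * n : ℕ) : ZMod (4 * n)) := rfl

lemma gg_zero (h2g : ((2 * g : ℕ) : ZMod m) = 0) : (g : ZMod m) + (g : ZMod m) = 0 := by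
  have : ((2 * g : ℕ) : ZMod m) = (g : ZMod m) + (g : ZMod m) := by push_cast; ring
  rw [← this, h2g]

lemma zL_eq (h2g : ((2 * g : ℕ) : ZMod m) = 0) :
    ofAdd (-(g : ZMod m)) = ofAdd ((g : ZMod m)) := by
  congr 1
  rw [neg_eq_iff_add_eq_zero]
  exact gg_zero h2g

lemma zelt_mul_self (h2g : ((2 * g : ℕ) : ZMod m) = 0) : zelt m n g * zelt m n g = 1 := by
  have := NeZero.ne n
  ext
  · rw [mul_left, zelt_left, zelt_right, phi_two_n]
    show ofAdd (-(g:ZMod m) + -(g:ZMod m)) = (1 : MM m)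
    have h0 : -(g:ZMod m) + -(g:ZMod m) = 0 := by
      have := gg_zero h2g; linear_combination -this
    rw [h0]; rfl
  · rw [mul_right, zelt_right]
    show ofAdd (((2 * n : ℕ) : ZMod (4 * n)) + ((2 * n : ℕ) : ZMod (4 * n)))
      = (1 : Multiplicative (ZMod (4*n)))
    have h0 : ((2 * n : ℕ) : ZMod (4 * n)) + ((2 * n : ℕ) : ZMod (4 * n)) = 0 := by
      have : (((2 * n : ℕ) : ZMod (4 * n))) + ((2 * n : ℕ) : ZMod (4 * n))
          = ((4 * n : ℕ) : ZMod (4 * n)) := by push_cast; ring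
      rw [this, ZMod.natCast_self]
    rw [h0]; rfl

lemma zelt_sq (h2g : ((2 * g : ℕ) : ZMod m) = 0) : zelt m n g ^ 2 = 1 := by
  rw [pow_two]; exact zelt_mul_self h2g

lemma zelt_ne_one : zelt m n g ≠ 1 := by
  intro hz
  have : (zelt m n g).right = 1 := by rw [hz]; rfl
  rw [zelt_right] at this
  have h2 : (((2 * n : ℕ) : ZMod (4 * n))).val = 0 := by
    rw [show ((2 * n : ℕ) : ZMod (4 * n)) = 0 from this]
    simp [ZMod.val_zero]
  rw [val_two_n] at h2
  have := NeZero.ne n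
  omega

lemma orderOf_zelt (h2g : ((2 * g : ℕ) : ZMod m) = 0) : orderOf (zelt m n g) = 2 :=
  orderOf_eq_prime (zelt_sq h2g) zelt_ne_one

lemma zelt_central (h2g : ((2 * g : ℕ) : ZMod m) = 0) (w : G0 m n) :
    w * zelt m n g = zelt m n g * w := by
  ext
  · rw [mul_left, mul_left, zelt_left, zelt_right, phi_two_n]
    have h1 : phi m n w.right (ofAdd (-(g : ZMod m))) = ofAdd (-(g : ZMod m)) := by
      rw [phi_apply]
      rcases Nat.even_or_odd (Multiplicative.toAdd w.right).val with he | ho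
      · rw [negA_pow_even _ he]
      · rw [negA_pow_odd _ ho, ← ofAdd_neg, neg_neg]
        exact (zL_eq h2g).symm
    rw [h1]
    rw [mul_comm]
  · rw [mul_right, mul_right]
    exact congrArg toAdd (mul_comm _ _)

lemma zpowers_zelt_normal (h2g : ((2 * g : ℕ) : ZMod m) = 0) :
    (Subgroup.zpowers (zelt m n g)).Normal := by
  constructor
  intro x hx w
  obtain ⟨k, rfl⟩ := hx
  have hc : Commute w (zelt m n g) := zelt_central h2g w
  have : w * (zelt m n g) ^ k * w⁻¹ = (zelt m n g) ^ k := by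
    rw [(hc.zpow_right k).eq, mul_assoc, mul_inv_cancel, mul_one]
  rw [this]
  exact Subgroup.zpow_mem _ (Subgroup.mem_zpowers _) k

lemma Z0_eq (h2g : ((2 * g : ℕ) : ZMod m) = 0) :
    Z0 m n g = Subgroup.zpowers (zelt m n g) := by
  haveI := zpowers_zelt_normal (m := m) (n := n) h2g
  apply le_antisymm
  · exact Subgroup.normalClosure_le_normal
      (Set.singleton_subset_iff.2 (Subgroup.mem_zpowers _))
  · rw [Subgroup.zpowers_le]
    exact Subgroup.subset_normalClosure (Set.mem_singleton _)


/-! ### product subgroups -/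

variable (m n)

def prodSub (A : Subgroup (MM m)) (B : Subgroup (Multiplicative (ZMod (4 * n)))) :
    Subgroup (G0 m n) where
  carrier := {x | x.left ∈ A ∧ x.right ∈ B}
  one_mem' := ⟨by rw [one_left]; exact one_mem A, by rw [one_right]; exact one_mem B⟩
  mul_mem' := by
    rintro a b ⟨ha1, ha2⟩ ⟨hb1, hb2⟩
    exact ⟨by rw [mul_left]; exact mul_mem ha1 (phi_mem m n A _ hb1),
      by rw [mul_right]; exact mul_mem ha2 hb2⟩
  inv_mem' := by
    rintro a ⟨ha1, ha2⟩
    exact ⟨by rw [inv_left]; exact phi_mem m n A _ (inv_mem ha1),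
      by rw [inv_right]; exact inv_mem ha2⟩

lemma mem_prodSub {A : Subgroup (MM m)} {B : Subgroup (Multiplicative (ZMod (4 * n)))}
    {x : G0 m n} : x ∈ prodSub m n A B ↔ x.left ∈ A ∧ x.right ∈ B := Iff.rfl

def prodSubEquiv (A : Subgroup (MM m)) (B : Subgroup (Multiplicative (ZMod (4 * n)))) :
    prodSub m n A B ≃ A × B where
  toFun x := (⟨x.1.left, x.2.1⟩, ⟨x.1.right, x.2.2⟩)
  invFun p := ⟨⟨p.1.1, p.2.1⟩, p.1.2, p.2.2⟩
  left_inv := by rintro ⟨⟨xl, xr⟩, hx⟩; rfl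
  right_inv := by rintro ⟨⟨x1, h1⟩, ⟨x2, h2⟩⟩; rfl

lemma card_prodSub (A : Subgroup (MM m)) (B : Subgroup (Multiplicative (ZMod (4 * n)))) :
    Nat.card (prodSub m n A B) = Nat.card A * Nat.card B := by
  rw [Nat.card_congr (prodSubEquiv m n A B), Nat.card_prod]

variable (g) in
/-- key counting identity -/
lemma card_map_mul_card_ker (H0 : Subgroup (G0 m n)) :
    Nat.card (H0.map (QuotientGroup.mk' (Z0 m n g)))
      * Nat.card ((Z0 m n g).subgroupOf H0) = Nat.card H0 := by
  set f := (QuotientGroup.mk' (Z0 m n g)).comp H0.subtype with hf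
  have hker : f.ker = (Z0 m n g).subgroupOf H0 := by
    rw [hf, ← MonoidHom.comap_ker, QuotientGroup.ker_mk']
    rfl
  have hrange : f.range = H0.map (QuotientGroup.mk' (Z0 m n g)) := by
    rw [hf, MonoidHom.range_comp, Subgroup.range_subtype]
  rw [← hker, ← hrange]
  rw [← Nat.card_congr (QuotientGroup.quotientKerEquivRange f).toEquiv]
  exact (Subgroup.card_eq_card_quotient_mul_card_subgroup f.ker).symm

variable {m n}

lemma card_map_of_mem (h2g : ((2 * g : ℕ) : ZMod m) = 0)
    {H0 : Subgroup (G0 m n)} (hz : zelt m n g ∈ H0) :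
    Nat.card (H0.map (QuotientGroup.mk' (Z0 m n g))) * 2 = Nat.card H0 := by
  have hle : Z0 m n g ≤ H0 := by
    rw [Z0_eq h2g, Subgroup.zpowers_le]; exact hz
  have h1 : Nat.card ((Z0 m n g).subgroupOf H0) = 2 := by
    rw [Nat.card_congr (Subgroup.subgroupOfEquivOfLe hle).toEquiv,
      Z0_eq h2g, Nat.card_zpowers, orderOf_zelt h2g]
  rw [← h1]
  exact card_map_mul_card_ker m n g H0

lemma card_map_of_not_mem (h2g : ((2 * g : ℕ) : ZMod m) = 0)
    {H0 : Subgroup (G0 m n)} (hz : zelt m n g ∉ H0) :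
    Nat.card (H0.map (QuotientGroup.mk' (Z0 m n g))) = Nat.card H0 := by
  have h1 : (Z0 m n g).subgroupOf H0 = ⊥ := by
    rw [Subgroup.eq_bot_iff_forall]
    rintro ⟨x, hxH⟩ hxZ
    rw [Subgroup.mem_subgroupOf] at hxZ
    rw [Z0_eq h2g] at hxZ
    obtain ⟨k, hk⟩ := hxZ
    have hk' : zelt m n g ^ k = x := hk
    have heven : ∀ t : ℤ, zelt m n g ^ (t + t) = 1 := by
      intro t
      rw [zpow_add, ← (Commute.refl (zelt m n g)).mul_zpow, zelt_mul_self h2g, one_zpow]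
    rcases Int.even_or_odd k with ⟨t, rfl⟩ | ⟨t, rfl⟩
    · apply Subtype.ext
      show x = 1
      rw [← hk', heven t]
    · exfalso
      apply hz
      have : zelt m n g ^ (2 * t + 1) = zelt m n g := by
        rw [zpow_add, two_mul, heven t, one_mul, zpow_one]
      rw [← this, hk']
      exact hxH
  rw [← card_map_mul_card_ker m n g H0, h1]
  simp


/-! ### helpers about `ofAdd` powers -/

lemma ofAdd_one_pow (N : ℕ) (k : ℕ) :
    (ofAdd (1 : ZMod N)) ^ k = ofAdd ((k : ℕ) : ZMod N) := by
  rw [← ofAdd_nsmul]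
  congr 1
  rw [nsmul_eq_mul, mul_one]

lemma ofAdd_natCast_pow (N c k : ℕ) :
    (ofAdd ((c : ℕ) : ZMod N)) ^ k = ofAdd (((k * c : ℕ)) : ZMod N) := by
  rw [← ofAdd_nsmul]
  congr 1
  rw [nsmul_eq_mul]
  push_cast
  ring

lemma hom_ext_mzmod {H : Type*} [Group H] {N : ℕ} [NeZero N]
    {F G : Multiplicative (ZMod N) →* H}
    (h : F (ofAdd (1 : ZMod N)) = G (ofAdd (1 : ZMod N))) : F = G := by
  refine MonoidHom.ext fun x => ?_
  have hx : x = (ofAdd (1 : ZMod N)) ^ ZMod.val (n := N) (Multiplicative.toAdd x) := by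
    rw [ofAdd_one_pow, ZMod.natCast_val, ZMod.cast_id', id_eq, ofAdd_toAdd]
  rw [hx, map_pow, map_pow, h]

/-! ### the presented group -/

variable (m n g) [NeZero m] [NeZero n]

abbrev P := PresentedGroup (Krels m n g)

def aP : P m n g := PresentedGroup.of 0
def bP : P m n g := PresentedGroup.of 1

lemma relOne {r : FreeGroup (Fin 2)} (hr : r ∈ Krels m n g) :
    PresentedGroup.mk (Krels m n g) r = 1 :=
  (QuotientGroup.eq_one_iff r).2 (Subgroup.subset_normalClosure hr)

variable {m n g}

lemma rel1 : aP m n g ^ m = 1 := by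
  have := relOne m n g (r := FreeGroup.of 0 ^ m) (by left; rfl)
  rwa [map_pow] at this

lemma rel2 : bP m n g ^ (2 * n) = aP m n g ^ g := by
  have := relOne m n g (r := FreeGroup.of 1 ^ (2 * n) * (FreeGroup.of 0 ^ g)⁻¹)
    (by right; left; rfl)
  rw [map_mul, map_inv, map_pow, map_pow] at this
  exact mul_inv_eq_one.mp this

lemma rel3 : bP m n g * aP m n g * (bP m n g)⁻¹ = (aP m n g)⁻¹ := by
  have := relOne m n g
    (r := FreeGroup.of 1 * FreeGroup.of 0 * (FreeGroup.of 1)⁻¹ * FreeGroup.of 0)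
    (by right; right; rfl)
  rw [map_mul, map_mul, map_mul, map_inv] at this
  exact eq_inv_of_mul_eq_one_left this

lemma rel4 (hg : g = 0 ∨ 2 * g = m) : aP m n g ^ (2 * g) = 1 := by
  rcases hg with rfl | hgm
  · simp
  · rw [hgm]; exact rel1

lemma rel5 (hg : g = 0 ∨ 2 * g = m) : bP m n g ^ (4 * n) = 1 := by
  have h4 : 4 * n = 2 * n * 2 := by ring
  rw [h4, pow_mul, rel2, ← pow_mul, mul_comm g 2, rel4 hg]

lemma conj_pow_aux (s : ℕ) :
    bP m n g * aP m n g ^ s * (bP m n g)⁻¹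
      = (bP m n g * aP m n g * (bP m n g)⁻¹) ^ s := by
  induction s with
  | zero => simp
  | succ k ih =>
    rw [pow_succ, pow_succ, ← ih]
    group

lemma conj_pow (s : ℕ) :
    bP m n g * aP m n g ^ s * (bP m n g)⁻¹ = (aP m n g ^ s)⁻¹ := by
  rw [conj_pow_aux, rel3, inv_pow]

lemma conj_powk (k s : ℕ) :
    bP m n g ^ k * aP m n g ^ s * (bP m n g ^ k)⁻¹
      = if Even k then aP m n g ^ s else (aP m n g ^ s)⁻¹ := by
  induction k with
  | zero => simp
  | succ k ih =>
    have hstep : bP m n g ^ (k + 1) * aP m n g ^ s * (bP m n g ^ (k + 1))⁻¹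
        = bP m n g * (bP m n g ^ k * aP m n g ^ s * (bP m n g ^ k)⁻¹) * (bP m n g)⁻¹ := by
      rw [pow_succ']
      group
    rw [hstep, ih]
    by_cases hk : Even k
    · rw [if_pos hk, if_neg (by simpa [Nat.even_add_one] using hk), conj_pow]
    · rw [if_neg hk, if_pos (by simpa [Nat.even_add_one] using hk)]
      have hc := conj_pow (m := m) (n := n) (g := g) s
      calc bP m n g * (aP m n g ^ s)⁻¹ * (bP m n g)⁻¹
          = (bP m n g * aP m n g ^ s * (bP m n g)⁻¹)⁻¹ := by group
        _ = aP m n g ^ s := by rw [hc, inv_inv]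

variable (m n g)

def f1 : MM m →* P m n g := zmodPowHom m (aP m n g) rel1

def f2 (hg : g = 0 ∨ 2 * g = m) : Multiplicative (ZMod (4 * n)) →* P m n g :=
  zmodPowHom (4 * n) (bP m n g) (rel5 hg)

lemma compat (hg : g = 0 ∨ 2 * g = m) (j : Multiplicative (ZMod (4 * n))) :
    (f1 m n g).comp ((phi m n j).toMonoidHom)
      = (MulAut.conj (f2 m n g hg j)).toMonoidHom.comp (f1 m n g) := by
  refine MonoidHom.ext fun x => ?_
  show f1 m n g (phi m n j x)
    = f2 m n g hg j * f1 m n g x * (f2 m n g hg j)⁻¹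
  have hf1 : f1 m n g x = aP m n g ^ ZMod.val (n := m) (Multiplicative.toAdd x) := rfl
  have hf2 : f2 m n g hg j = bP m n g ^ (Multiplicative.toAdd j).val := rfl
  rw [phi_apply, hf1, hf2, conj_powk]
  rcases Nat.even_or_odd (Multiplicative.toAdd j).val with he | ho
  · rw [negA_pow_even _ he, if_pos he, hf1]
  · rw [negA_pow_odd _ ho, if_neg (Nat.not_even_iff_odd.mpr ho), map_inv, hf1]

def LL (hg : g = 0 ∨ 2 * g = m) : G0 m n →* P m n g :=
  SemidirectProduct.lift (f1 m n g) (f2 m n g hg) (compat m n g hg)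

lemma f1_natCast (k : ℕ) : f1 m n g (ofAdd ((k : ℕ) : ZMod m)) = aP m n g ^ k :=
  zmodPowHom_natCast m (aP m n g) rel1 k

lemma f2_natCast (hg : g = 0 ∨ 2 * g = m) (k : ℕ) :
    f2 m n g hg (ofAdd ((k : ℕ) : ZMod (4 * n))) = bP m n g ^ k :=
  zmodPowHom_natCast (4 * n) (bP m n g) (rel5 hg) k

lemma LL_zelt (hg : g = 0 ∨ 2 * g = m) : LL m n g hg (zelt m n g) = 1 := by
  have hz : zelt m n g = inl (ofAdd (-(g : ZMod m)))
      * inr (ofAdd ((2 * n : ℕ) : ZMod (4 * n))) := mk_eq_inl_mul_inr _ _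
  rw [hz, map_mul, LL, lift_inl, lift_inr, ofAdd_neg, map_inv, f1_natCast,
    f2_natCast, rel2, inv_mul_cancel]

def toP (hg : g = 0 ∨ 2 * g = m) : Kgrp m n g →* P m n g :=
  QuotientGroup.lift (Z0 m n g) (LL m n g hg) (by
    intro x hx
    have hle : Z0 m n g ≤ (LL m n g hg).ker :=
      Subgroup.normalClosure_le_normal
        (Set.singleton_subset_iff.2 (by
          rw [SetLike.mem_coe, MonoidHom.mem_ker]; exact LL_zelt m n g hg))
    exact hle hx)

def fgen : Fin 2 → Kgrp m n g :=
  ![QuotientGroup.mk' (Z0 m n g) (inl (ofAdd (1 : ZMod m))),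
    QuotientGroup.mk' (Z0 m n g) (inr (ofAdd (1 : ZMod (4 * n))))]

lemma hrels : ∀ r ∈ Krels m n g, FreeGroup.lift (fgen m n g) r = 1 := by
  have := NeZero.ne n
  intro r hr
  have h0 : FreeGroup.lift (fgen m n g) (FreeGroup.of 0)
      = QuotientGroup.mk' (Z0 m n g) (inl (ofAdd (1 : ZMod m))) := by
    rw [FreeGroup.lift_apply_of]; rfl
  have h1 : FreeGroup.lift (fgen m n g) (FreeGroup.of 1)
      = QuotientGroup.mk' (Z0 m n g) (inr (ofAdd (1 : ZMod (4 * n)))) := by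
    rw [FreeGroup.lift_apply_of]; rfl
  rcases hr with rfl | rfl | rfl
  · rw [map_pow, h0, ← map_pow, ← map_pow, ofAdd_one_pow, ZMod.natCast_self]
    simp
  · rw [map_mul, map_inv, map_pow, map_pow, h0, h1]
    have e1 : (QuotientGroup.mk' (Z0 m n g) (inr (ofAdd (1 : ZMod (4 * n))))) ^ (2 * n)
        = QuotientGroup.mk' (Z0 m n g) (inr (ofAdd (((2 * n : ℕ)) : ZMod (4 * n)))) := by
      rw [← map_pow, ← map_pow, ofAdd_one_pow]
    have e2 : (QuotientGroup.mk' (Z0 m n g) (inl (ofAdd (1 : ZMod m)))) ^ g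
        = QuotientGroup.mk' (Z0 m n g) (inl (ofAdd ((g : ℕ) : ZMod m))) := by
      rw [← map_pow, ← map_pow, ofAdd_one_pow]
    rw [e1, e2, ← map_inv, ← map_mul]
    apply (QuotientGroup.eq_one_iff _).2
    have key : inr (φ := phi m n) (ofAdd (((2 * n : ℕ)) : ZMod (4 * n)))
        * (inl (ofAdd ((g : ℕ) : ZMod m)))⁻¹ = zelt m n g := by
      rw [← map_inv]
      ext
      · rw [mul_left, left_inr, one_mul, left_inl, right_inr, phi_two_n, zelt_left, ofAdd_neg]
      · rw [mul_right, right_inr, right_inl, mul_one, zelt_right]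
    rw [key]
    exact Subgroup.subset_normalClosure (Set.mem_singleton _)
  · rw [map_mul, map_mul, map_mul, map_inv, h0, h1,
      ← map_inv, ← map_mul, ← map_mul, ← map_mul]
    have key : inr (φ := phi m n) (ofAdd (1 : ZMod (4 * n))) * inl (ofAdd (1 : ZMod m))
        * (inr (ofAdd (1 : ZMod (4 * n))))⁻¹ * inl (ofAdd (1 : ZMod m)) = 1 := by
      rw [← map_inv, ← inl_aut, ← map_mul]
      have hval : ((1 : ZMod (4 * n))).val = 1 := by
        have : ((1 : ZMod (4 * n))) = ((1 : ℕ) : ZMod (4 * n)) := by norm_cast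
        rw [this, ZMod.val_natCast, Nat.mod_eq_of_lt (by omega)]
      have hphi : phi m n (ofAdd (1 : ZMod (4 * n))) (ofAdd (1 : ZMod m))
          = (ofAdd (1 : ZMod m))⁻¹ := by
        rw [phi_apply, toAdd_ofAdd, hval, negA_pow_odd _ (by norm_num)]
      rw [hphi, inv_mul_cancel, map_one]
    rw [key, map_one]

def toK : P m n g →* Kgrp m n g := PresentedGroup.toGroup (hrels m n g)

lemma f1_one : f1 m n g (ofAdd (1 : ZMod m)) = aP m n g := by
  have := f1_natCast m n g 1
  rwa [Nat.cast_one, pow_one] at this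

lemma f2_one (hg : g = 0 ∨ 2 * g = m) :
    f2 m n g hg (ofAdd (1 : ZMod (4 * n))) = bP m n g := by
  have := f2_natCast m n g hg 1
  rwa [Nat.cast_one, pow_one] at this

lemma toP_toK (hg : g = 0 ∨ 2 * g = m) :
    (toP m n g hg).comp (toK m n g) = MonoidHom.id (P m n g) := by
  apply PresentedGroup.ext
  intro x
  fin_cases x
  · show toP m n g hg (toK m n g (PresentedGroup.of 0)) = PresentedGroup.of 0
    rw [toK, PresentedGroup.toGroup.of]
    show toP m n g hg (QuotientGroup.mk' (Z0 m n g) (inl (ofAdd (1 : ZMod m)))) = _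
    rw [toP]
    show LL m n g hg (inl (ofAdd (1 : ZMod m))) = _
    rw [LL, lift_inl, f1_one]
    rfl
  · show toP m n g hg (toK m n g (PresentedGroup.of 1)) = PresentedGroup.of 1
    rw [toK, PresentedGroup.toGroup.of]
    show toP m n g hg (QuotientGroup.mk' (Z0 m n g) (inr (ofAdd (1 : ZMod (4 * n))))) = _
    rw [toP]
    show LL m n g hg (inr (ofAdd (1 : ZMod (4 * n)))) = _
    rw [LL, lift_inr, f2_one]
    rfl

lemma toK_toP (hg : g = 0 ∨ 2 * g = m) :
    (toK m n g).comp (toP m n g hg) = MonoidHom.id (Kgrp m n g) := by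
  rw [← MonoidHom.cancel_right (QuotientGroup.mk'_surjective (Z0 m n g))]
  apply SemidirectProduct.hom_ext
  · apply hom_ext_mzmod
    show toK m n g (toP m n g hg (QuotientGroup.mk' (Z0 m n g) (inl (ofAdd (1 : ZMod m)))))
      = QuotientGroup.mk' (Z0 m n g) (inl (ofAdd (1 : ZMod m)))
    have h1 : toP m n g hg (QuotientGroup.mk' (Z0 m n g) (inl (ofAdd (1 : ZMod m))))
        = aP m n g := by
      rw [toP]
      show LL m n g hg (inl (ofAdd (1 : ZMod m))) = _
      rw [LL, lift_inl, f1_one]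
    rw [h1]
    show toK m n g (PresentedGroup.of 0) = _
    rw [toK, PresentedGroup.toGroup.of]
    rfl
  · apply hom_ext_mzmod
    show toK m n g (toP m n g hg (QuotientGroup.mk' (Z0 m n g)
        (inr (ofAdd (1 : ZMod (4 * n))))))
      = QuotientGroup.mk' (Z0 m n g) (inr (ofAdd (1 : ZMod (4 * n))))
    have h1 : toP m n g hg (QuotientGroup.mk' (Z0 m n g) (inr (ofAdd (1 : ZMod (4 * n)))))
        = bP m n g := by
      rw [toP]
      show LL m n g hg (inr (ofAdd (1 : ZMod (4 * n)))) = _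
      rw [LL, lift_inr, f2_one]
    rw [h1]
    show toK m n g (PresentedGroup.of 1) = _
    rw [toK, PresentedGroup.toGroup.of]
    rfl

def equivKP (hg : g = 0 ∨ 2 * g = m) : Kgrp m n g ≃* P m n g :=
  MonoidHom.toMulEquiv (toP m n g hg) (toK m n g) (toK_toP m n g hg) (toP_toK m n g hg)

lemma solvable_P (hg : g = 0 ∨ 2 * g = m) : IsSolvable (P m n g) := by
  haveI : Group.IsSolvable (G0 m n) :=
    solvable_of_ker_le_range inl rightHom (le_of_eq (range_inl_eq_ker_rightHom).symm)
  haveI : Group.IsSolvable (Kgrp m n g) :=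
    solvable_of_surjective (QuotientGroup.mk'_surjective (Z0 m n g))
  exact solvable_of_surjective (equivKP m n g hg).surjective


lemma card_zpowers_ofAdd (N c : ℕ) [NeZero N] :
    Nat.card (Subgroup.zpowers (ofAdd ((c : ℕ) : ZMod N))) = N / N.gcd c := by
  rw [Nat.card_zpowers, orderOf_ofAdd_eq_addOrderOf, ZMod.addOrderOf_coe c (NeZero.ne N)]

lemma exists_subgroup_Kgrp (hg : g = 0 ∨ 2 * g = m) {d e : ℕ}
    (hd : d ∣ m) (he : e ∣ 2 * n) :
    ∃ H : Subgroup (Kgrp m n g), Nat.card H = d * e := by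
  have hm0 := NeZero.ne m
  have hn0 := NeZero.ne n
  have h2g : ((2 * g : ℕ) : ZMod m) = 0 := by
    rcases hg with rfl | hh
    · simp
    · rw [hh, ZMod.natCast_self]
  have hd0 : d ≠ 0 := by rintro rfl; exact hm0 (Nat.eq_zero_of_zero_dvd hd)
  have he0 : e ≠ 0 := by
    rintro rfl; have := Nat.eq_zero_of_zero_dvd he; omega
  have hmd : d * (m / d) = m := Nat.mul_div_cancel' hd
  set A : Subgroup (MM m) := Subgroup.zpowers (ofAdd ((m / d : ℕ) : ZMod m)) with hA
  have cardA : Nat.card A = d := by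
    rw [hA, card_zpowers_ofAdd, Nat.gcd_comm, Nat.gcd_eq_left (Nat.div_dvd_of_dvd hd),
      Nat.div_div_self hd hm0]
  by_cases hgood : g = 0 ∨ d % 2 = 0
  · -- the case where `zelt` lies in the product subgroup
    set B : Subgroup (Multiplicative (ZMod (4 * n))) :=
      Subgroup.zpowers (ofAdd ((2 * n / e : ℕ) : ZMod (4 * n))) with hB
    have hdvd1 : (2 * n / e) ∣ 4 * n :=
      dvd_trans (Nat.div_dvd_of_dvd he) ⟨2, by ring⟩
    have cardB : Nat.card B = 2 * e := by
      rw [hB, card_zpowers_ofAdd, Nat.gcd_comm, Nat.gcd_eq_left hdvd1]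
      have h1 : 2 * n / e * e = 2 * n := Nat.div_mul_cancel he
      have hx : (2 * e) * (2 * n / e) = 4 * n := by
        calc (2 * e) * (2 * n / e) = (2 * n / e * e) * 2 := by ring
          _ = 4 * n := by rw [h1]; ring
      have h2ne : 0 < 2 * n / e := Nat.div_pos (Nat.le_of_dvd (by omega) he) (by omega)
      exact Nat.div_eq_of_eq_mul_left h2ne hx.symm
    set H0 := prodSub m n A B with hH0
    have hzin : zelt m n g ∈ H0 := by
      rw [hH0, mem_prodSub]
      constructor
      · rw [zelt_left, ofAdd_neg]
        apply inv_mem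
        have hmem : ofAdd ((g : ℕ) : ZMod m) ∈ A := by
          rcases hg with rfl | hgm
          · rw [show (((0 : ℕ) : ZMod m)) = 0 by norm_cast, ofAdd_zero]
            exact one_mem A
          · have hdeven : d % 2 = 0 := by
              rcases hgood with rfl | h2
              · omega
              · exact h2
            obtain ⟨t, ht⟩ : ∃ t, d = 2 * t := ⟨d / 2, by omega⟩
            have htg : t * (m / d) = g := by
              have h2' : 2 * (t * (m / d)) = 2 * g := by
                calc 2 * (t * (m / d)) = (2 * t) * (m / d) := by ring
                  _ = d * (m / d) := by rw [← ht]
                  _ = m := hmd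
                  _ = 2 * g := hgm.symm
              omega
            rw [← htg, ← ofAdd_natCast_pow]
            exact Subgroup.pow_mem _ (Subgroup.mem_zpowers _) t
        exact hmem
      · rw [zelt_right]
        have hpow : (ofAdd ((2 * n / e : ℕ) : ZMod (4 * n))) ^ e
            = ofAdd ((2 * n : ℕ) : ZMod (4 * n)) := by
          rw [ofAdd_natCast_pow]
          congr 2
          calc e * (2 * n / e) = 2 * n / e * e := by ring
            _ = 2 * n := Nat.div_mul_cancel he
        rw [← hpow]
        exact Subgroup.pow_mem _ (Subgroup.mem_zpowers _) e
    have hcard0 : Nat.card H0 = d * (2 * e) := by rw [hH0, card_prodSub, cardA, cardB]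
    refine ⟨H0.map (QuotientGroup.mk' (Z0 m n g)), ?_⟩
    have hmul := card_map_of_mem h2g hzin
    apply Nat.eq_of_mul_eq_mul_right (show 0 < 2 by norm_num)
    rw [hmul, hcard0]
    ring
  · -- the case where `zelt` avoids the product subgroup
    push_neg at hgood
    obtain ⟨hgne, hdodd⟩ := hgood
    have hgm : 2 * g = m := hg.resolve_left hgne
    set B : Subgroup (Multiplicative (ZMod (4 * n))) :=
      Subgroup.zpowers (ofAdd ((4 * n / e : ℕ) : ZMod (4 * n))) with hB
    have he4 : e ∣ 4 * n := dvd_trans he ⟨2, by ring⟩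
    have cardB : Nat.card B = e := by
      rw [hB, card_zpowers_ofAdd, Nat.gcd_comm,
        Nat.gcd_eq_left (Nat.div_dvd_of_dvd he4), Nat.div_div_self he4 (by omega)]
    set H0 := prodSub m n A B with hH0
    have hzout : zelt m n g ∉ H0 := by
      rw [hH0, mem_prodSub]
      rintro ⟨hl, -⟩
      rw [zelt_left, ofAdd_neg] at hl
      have hl' : ofAdd ((g : ℕ) : ZMod m) ∈ A := by
        have := inv_mem hl
        rwa [inv_inv] at this
      rw [hA, Subgroup.mem_zpowers_iff] at hl'
      obtain ⟨k, hk⟩ := hl'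
      rw [← ofAdd_zsmul] at hk
      have heq : (k : ZMod m) * ((m / d : ℕ) : ZMod m) = ((g : ℕ) : ZMod m) := by
        have := Multiplicative.ofAdd.injective hk
        rwa [zsmul_eq_mul] at this
      have hzmod : (((k * (m / d : ℕ) - (g : ℕ) : ℤ)) : ZMod m) = 0 := by
        rw [Int.cast_sub, Int.cast_mul, Int.cast_natCast, Int.cast_natCast, heq, sub_self]
      have hdvdm : (m : ℤ) ∣ (k * (m / d : ℕ) - (g : ℕ) : ℤ) :=
        (ZMod.intCast_zmod_eq_zero_iff_dvd _ m).mp hzmod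
      have hcm : ((m / d : ℕ) : ℤ) ∣ (m : ℤ) :=
        Int.natCast_dvd_natCast.mpr (Nat.div_dvd_of_dvd hd)
      have hcg : ((m / d : ℕ) : ℤ) ∣ ((g : ℕ) : ℤ) := by
        have h1 : ((m / d : ℕ) : ℤ) ∣ (k * (m / d : ℕ) - (g : ℕ) : ℤ) :=
          dvd_trans hcm hdvdm
        have h2 : ((m / d : ℕ) : ℤ) ∣ (k * (m / d : ℕ) : ℤ) := dvd_mul_left _ _
        have := dvd_sub h2 h1
        simpa using this
      have hcgn : (m / d) ∣ g := Int.natCast_dvd_natCast.mp hcg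
      obtain ⟨t, hgt⟩ := hcgn
      have hmd2 : (m / d) * d = m := by rw [mul_comm]; exact hmd
      have hkey : (m / d) * d = (m / d) * (2 * t) := by
        rw [hmd2]
        calc m = 2 * g := hgm.symm
          _ = 2 * ((m / d) * t) := by rw [hgt]
          _ = (m / d) * (2 * t) := by ring
      have hmd0 : 0 < m / d := Nat.div_pos (Nat.le_of_dvd (by omega) hd) (by omega)
      have := Nat.eq_of_mul_eq_mul_left hmd0 hkey
      omega
    have hcard0 : Nat.card H0 = d * e := by rw [hH0, card_prodSub, cardA, cardB]
    refine ⟨H0.map (QuotientGroup.mk' (Z0 m n g)), ?_⟩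
    rw [card_map_of_not_mem h2g hzout, hcard0]

end KAux

theorem stmt18 (m n g : ℕ) (hm : 1 ≤ m) (hn : 1 ≤ n)
    (hgodd : Odd m → g = 0) (hg : g = 0 ∨ 2 * g = m) :
    IsSolvable (PresentedGroup (Krels m n g)) ∧
      ∀ h : ℕ, h ∣ 2 * m * n →
        ∃ H : Subgroup (PresentedGroup (Krels m n g)), Nat.card H = h := by
  haveI : NeZero m := ⟨by omega⟩
  haveI : NeZero n := ⟨by omega⟩
  constructor
  · exact KAux.solvable_P m n g hg
  · intro h hdvd
    rw [show 2 * m * n = m * (2 * n) by ring] at hdvd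
    obtain ⟨d, e, hd, he, hde⟩ := Nat.dvd_mul.1 hdvd
    obtain ⟨H, hH⟩ := KAux.exists_subgroup_Kgrp (m := m) (n := n) (g := g) hg hd he
    refine ⟨H.map (KAux.equivKP m n g hg).toMonoidHom, ?_⟩
    rw [← hde, ← hH]
    exact (Nat.card_congr
      (Subgroup.equivMapOfInjective H _ (KAux.equivKP m n g hg).injective).toEquiv).symm
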